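/- For all integers n ≥ 1, d ≥ 2 and all integers i, k with 0 ≤ i ≤ k ≤ nd, i ≢ 0 (mod d) and k ≢ 0 (mod d), the arithmetic Hodge sums satisfy H_i ≤ H_k. -/

import Mathlib

/-- The Hodge number `h_j` of the simplex `Simp(n,d)`. -/
noncomputable def hodge (n d : ℕ) (j : ℤ) : ℕ :=
  ((Fintype.piFinset fun _ : Fin n => Finset.Icc (1 : ℤ) ((d : ℤ) - 1)).filter
    fun u => ∑ i, u i = j).card

/-- The arithmetic Hodge sum `H_i := Σ_{j=0}^{⌊i/d⌋} h_{i−jd}`, with `H_i = 0` for `i < 0`. -/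
noncomputable def Hsum (n d : ℕ) (i : ℤ) : ℤ :=
  if i < 0 then 0
  else ∑ j ∈ Finset.range ((i / d).toNat + 1), (hodge n d (i - (j : ℤ) * d) : ℤ)


lemma hodge_eq_zero (n d : ℕ) (j : ℤ) (hj : j < 0) : hodge n d j = 0 := by
  unfold hodge
  rw [Finset.card_eq_zero, Finset.filter_eq_empty_iff]
  intro u hu
  rw [Fintype.mem_piFinset] at hu
  intro hsum
  have : (0:ℤ) ≤ ∑ i, u i := Finset.sum_nonneg fun i _ => by
    have := hu i; rw [Finset.mem_Icc] at this; omega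
  omega

lemma hodge_zero_n (d : ℕ) (j : ℤ) : hodge 0 d j = if j = 0 then 1 else 0 := by
  unfold hodge
  split_ifs with h
  · subst h
    simp
  · rw [Finset.card_eq_zero, Finset.filter_eq_empty_iff]
    intro u _
    simpa using fun hs => h hs.symm

lemma hodge_succ (n d : ℕ) (j : ℤ) :
    hodge (n+1) d j = ∑ x ∈ Finset.Icc (1:ℤ) ((d:ℤ)-1), hodge n d (j - x) := by
  classical
  unfold hodge
  rw [Finset.card_eq_sum_card_fiberwise (f := fun u => u 0)
      (t := Finset.Icc (1:ℤ) ((d:ℤ)-1)) ?hmem]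
  case hmem =>
    intro u hu
    rw [Finset.mem_coe, Finset.mem_filter, Fintype.mem_piFinset] at hu
    exact hu.1 0
  refine Finset.sum_congr rfl fun x hx => ?_
  refine Finset.card_bij' (fun u _ => Fin.tail u) (fun v _ => Fin.cons x v)
    ?hi ?hj ?left ?right
  case hi =>
    intro u hu
    rw [Finset.mem_filter, Finset.mem_filter, Fintype.mem_piFinset] at hu
    obtain ⟨⟨h1, h2⟩, h3⟩ := hu
    rw [Finset.mem_filter, Fintype.mem_piFinset]
    refine ⟨fun a => h1 a.succ, ?_⟩
    rw [Fin.sum_univ_succ, h3] at h2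
    have heq : ∑ i : Fin n, Fin.tail u i = ∑ i : Fin n, u i.succ := rfl
    rw [heq]
    linarith
  case hj =>
    intro v hv
    rw [Finset.mem_filter, Fintype.mem_piFinset] at hv
    obtain ⟨h1, h2⟩ := hv
    rw [Finset.mem_filter, Finset.mem_filter, Fintype.mem_piFinset]
    refine ⟨⟨fun a => ?_, ?_⟩, ?_⟩
    · refine Fin.cases ?_ ?_ a
      · simpa using hx
      · intro a'; simpa using h1 a'
    · rw [Fin.sum_univ_succ]
      simp only [Fin.cons_zero, Fin.cons_succ]
      linarith
    · simp
  case left =>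
    intro u hu
    rw [Finset.mem_filter] at hu
    funext a
    refine Fin.cases ?_ ?_ a
    · simpa using hu.2.symm
    · intro a'
      simp [Fin.tail]
  case right =>
    intro v _
    funext a
    simp [Fin.tail]


lemma Hsum_nonneg (n d : ℕ) (i : ℤ) : 0 ≤ Hsum n d i := by
  unfold Hsum
  split_ifs
  · exact le_refl 0
  · exact Finset.sum_nonneg fun j _ => Int.natCast_nonneg _

lemma Hsum_eq_sum_range (n d : ℕ) (hd : 0 < d) (i : ℤ) (hi : 0 ≤ i) (M : ℕ)
    (hM : (i / d).toNat + 1 ≤ M) :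
    Hsum n d i = ∑ j ∈ Finset.range M, (hodge n d (i - (j : ℤ) * d) : ℤ) := by
  unfold Hsum
  rw [if_neg (by omega)]
  apply Finset.sum_subset (Finset.range_subset_range.2 hM)
  intro j _ hj
  rw [Finset.mem_range, not_lt] at hj
  have hd' : (0:ℤ) < d := by exact_mod_cast hd
  have h1 : i / d < (j : ℤ) := by
    have : ((i / d).toNat : ℤ) = i / d := Int.toNat_of_nonneg (Int.ediv_nonneg hi hd'.le)
    omega
  have h2 : i - (j:ℤ) * d < 0 := by
    have := Int.mul_ediv_add_emod i d
    have hmod : i % d < d := Int.emod_lt_of_pos i hd'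
    nlinarith [Int.emod_nonneg i (by omega : (d:ℤ) ≠ 0)]
  rw [hodge_eq_zero n d _ h2]
  simp

lemma Hsum_succ (n d : ℕ) (hd : 0 < d) (i : ℤ) :
    Hsum (n+1) d i = ∑ x ∈ Finset.Icc (1:ℤ) ((d:ℤ)-1), Hsum n d (i - x) := by
  by_cases hi : i < 0
  · rw [Hsum, if_pos hi]
    symm
    apply Finset.sum_eq_zero
    intro x hx
    rw [Finset.mem_Icc] at hx
    rw [Hsum, if_pos (by omega)]
  · push_neg at hi
    have hd' : (0:ℤ) < d := by exact_mod_cast hd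
    rw [Hsum, if_neg (by omega)]
    have : ∀ j ∈ Finset.range ((i / d).toNat + 1),
        (hodge (n+1) d (i - (j:ℤ) * d) : ℤ)
          = ∑ x ∈ Finset.Icc (1:ℤ) ((d:ℤ)-1), (hodge n d ((i - x) - (j:ℤ) * d) : ℤ) := by
      intro j _
      rw [hodge_succ]
      push_cast
      apply Finset.sum_congr rfl
      intro x _
      ring_nf
    rw [Finset.sum_congr rfl this, Finset.sum_comm]
    apply Finset.sum_congr rfl
    intro x hx
    rw [Finset.mem_Icc] at hx
    by_cases hix : i - x < 0
    · rw [Hsum, if_pos hix]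
      apply Finset.sum_eq_zero
      intro j _
      have hjd : (0:ℤ) ≤ (j:ℤ) * d := by positivity
      rw [hodge_eq_zero n d _ (by omega : (i - x) - (j:ℤ)*d < 0)]
      simp
    · push_neg at hix
      rw [Hsum_eq_sum_range n d hd (i - x) hix ((i / d).toNat + 1) ?_]
      have h1 : (i - x) / d ≤ i / d := Int.ediv_le_ediv hd' (by omega)
      have h2 : 0 ≤ (i-x)/d := Int.ediv_nonneg hix hd'.le
      have h3 : 0 ≤ i/d := Int.ediv_nonneg hi hd'.le
      omega

lemma Hsum_zero_n (d : ℕ) (hd : 0 < d) (i : ℤ) :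
    Hsum 0 d i = if 0 ≤ i ∧ (d:ℤ) ∣ i then 1 else 0 := by
  have hd' : (0:ℤ) < d := by exact_mod_cast hd
  by_cases hi : i < 0
  · rw [Hsum, if_pos hi, if_neg (by omega)]
  · push_neg at hi
    rw [Hsum, if_neg (by omega)]
    by_cases hdvd : (d:ℤ) ∣ i
    · rw [if_pos ⟨hi, hdvd⟩]
      have hkey : ∀ j ∈ Finset.range ((i / d).toNat + 1),
          (hodge 0 d (i - (j:ℤ)*d) : ℤ) = if j = (i/d).toNat then 1 else 0 := by
        intro j hj
        rw [hodge_zero_n]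
        have htn : ((i / d).toNat : ℤ) = i / d := Int.toNat_of_nonneg (Int.ediv_nonneg hi hd'.le)
        have hed : i / (d:ℤ) * d = i := Int.ediv_mul_cancel hdvd
        have hiff : i - (j:ℤ)*d = 0 ↔ j = (i/d).toNat := by
          constructor
          · intro h
            have h2 : (j:ℤ) * d = i / (d:ℤ) * d := by linarith
            have h3 : (j:ℤ) = i / (d:ℤ) := mul_right_cancel₀ (by omega) h2
            omega
          · intro h
            subst h
            rw [htn]
            linarith
        push_cast
        exact if_congr hiff rfl rfl
      rw [Finset.sum_congr rfl hkey, Finset.sum_ite_eq' (Finset.range ((i / ↑d).toNat + 1))]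
      rw [if_pos (Finset.mem_range.2 (by omega))]
    · rw [if_neg (by tauto)]
      apply Finset.sum_eq_zero
      intro j hj
      rw [hodge_zero_n, if_neg, Int.natCast_zero]
      intro h
      exact hdvd ⟨j, by linarith [h]⟩


/-- Order-preserving bijection `[1,d-1] \ {r} → [1,d-1] \ {r'}`, sending `r ↦ r'`. -/
def sigShift (r r' x : ℤ) : ℤ :=
  if x = r then r' else if r < x ∧ x ≤ r' then x - 1
  else if r' ≤ x ∧ x < r then x + 1 else x

/-- Inverse of `sigShift r r'`. -/
def tauShift (r r' y : ℤ) : ℤ :=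
  if y = r' then r else if r ≤ y ∧ y < r' then y + 1
  else if r' < y ∧ y ≤ r then y - 1 else y

lemma tauShift_mem (d r r' a : ℤ) (h1 : 1 ≤ r) (h2 : r ≤ d-1) (h3 : 1 ≤ r') (h4 : r' ≤ d-1)
    (h5 : 1 ≤ a) (h6 : a ≤ d-1) : 1 ≤ tauShift r r' a ∧ tauShift r r' a ≤ d - 1 := by
  unfold tauShift; split_ifs <;> omega

lemma sigShift_mem (d r r' a : ℤ) (h1 : 1 ≤ r) (h2 : r ≤ d-1) (h3 : 1 ≤ r') (h4 : r' ≤ d-1)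
    (h5 : 1 ≤ a) (h6 : a ≤ d-1) : 1 ≤ sigShift r r' a ∧ sigShift r r' a ≤ d - 1 := by
  unfold sigShift; split_ifs <;> omega

lemma sigShift_tauShift (r r' a : ℤ) : sigShift r r' (tauShift r r' a) = a := by
  unfold sigShift tauShift; split_ifs <;> omega

lemma tauShift_sigShift (r r' a : ℤ) : tauShift r r' (sigShift r r' a) = a := by
  unfold tauShift sigShift; split_ifs <;> omega

lemma sigShift_spec (r r' a : ℤ) (ha : a ≠ r) :
    sigShift r r' a ≠ r' ∧ sigShift r r' a ≤ a + 1 ∧ (r ≤ r' → sigShift r r' a ≤ a) := by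
  unfold sigShift; split_ifs <;> omega

lemma not_dvd_of_small (d : ℕ) (z : ℤ) (h1 : -(d:ℤ) < z) (h2 : z < d) (h3 : z ≠ 0) :
    ¬ (d:ℤ) ∣ z := fun hdvd => h3 (Int.eq_zero_of_abs_lt_dvd hdvd (abs_lt.2 ⟨h1, h2⟩))

theorem Hsum_key (d : ℕ) (hd : 2 ≤ d) (n : ℕ) :
    (∀ i k : ℤ, i ≤ k → ¬(d:ℤ) ∣ i → ¬(d:ℤ) ∣ k → Hsum n d i ≤ Hsum n d k) ∧
    (∀ i k : ℤ, i ≤ k → (d:ℤ) ∣ i → (d:ℤ) ∣ k → Hsum n d i ≤ Hsum n d k) := by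
  have hd' : (0:ℤ) < d := by exact_mod_cast Nat.lt_of_lt_of_le Nat.zero_lt_two hd
  induction n with
  | zero =>
    constructor
    · intro i k hik hi hk
      rw [Hsum_zero_n d (by omega), Hsum_zero_n d (by omega)]
      rw [if_neg (by tauto), if_neg (by tauto)]
    · intro i k hik hi hk
      rw [Hsum_zero_n d (by omega), Hsum_zero_n d (by omega)]
      split_ifs with h1 h2 h2
      · exact le_refl 1
      · exact absurd ⟨by omega, hk⟩ h2
      · omega
      · exact le_refl 0
  | succ n ih =>
    have hdvd_sub : ∀ m : ℤ, (d:ℤ) ∣ (m - m % d) := by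
      intro m
      refine ⟨m / d, ?_⟩
      have := Int.mul_ediv_add_emod m d
      linarith
    have hmod_lt : ∀ m : ℤ, m % (d:ℤ) < d := fun m => Int.emod_lt_of_pos m hd'
    have hmod_nonneg : ∀ m : ℤ, 0 ≤ m % (d:ℤ) := fun m => Int.emod_nonneg m (by omega)
    constructor
    · -- both non-multiples
      intro i k hik hi hk
      have hr0 : i % (d:ℤ) ≠ 0 := fun h => hi (Int.dvd_of_emod_eq_zero h)
      have hr'0 : k % (d:ℤ) ≠ 0 := fun h => hk (Int.dvd_of_emod_eq_zero h)
      have hrlt : i % (d:ℤ) < d := hmod_lt i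
      have hr'lt : k % (d:ℤ) < d := hmod_lt k
      have hrpos : 0 < i % (d:ℤ) := lt_of_le_of_ne (hmod_nonneg i) (Ne.symm hr0)
      have hr'pos : 0 < k % (d:ℤ) := lt_of_le_of_ne (hmod_nonneg k) (Ne.symm hr'0)
      have hik' : k % (d:ℤ) < i % (d:ℤ) → i + 1 ≤ k := by
        intro hlt
        rcases eq_or_lt_of_le hik with h | h
        · exfalso; rw [h] at hlt; omega
        · omega
      rw [Hsum_succ n d (by omega), Hsum_succ n d (by omega)]
      have hreindex : ∑ y ∈ Finset.Icc (1:ℤ) ((d:ℤ)-1), Hsum n d (k - y)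
          = ∑ x ∈ Finset.Icc (1:ℤ) ((d:ℤ)-1),
              Hsum n d (k - sigShift (i % d) (k % d) x) := by
        refine (Finset.sum_nbij' (sigShift (i % d) (k % d)) (tauShift (i % d) (k % d))
          ?_ ?_ ?_ ?_ ?_).symm
        · intro a ha
          rw [Finset.mem_Icc] at ha ⊢
          exact sigShift_mem d _ _ a hrpos (by omega) hr'pos (by omega) ha.1 ha.2
        · intro a ha
          rw [Finset.mem_Icc] at ha ⊢
          exact tauShift_mem d _ _ a hrpos (by omega) hr'pos (by omega) ha.1 ha.2
        · intro a _; exact tauShift_sigShift _ _ a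
        · intro a _; exact sigShift_tauShift _ _ a
        · intro a _; rfl
      rw [hreindex]
      apply Finset.sum_le_sum
      intro x hx
      rw [Finset.mem_Icc] at hx
      by_cases hxr : x = i % (d:ℤ)
      · -- the multiples slot
        subst hxr
        have hσx : sigShift (i % d) (k % d) (i % (d:ℤ)) = k % d := by
          unfold sigShift; rw [if_pos rfl]
        rw [hσx]
        apply ih.2
        · have h1 : i / (d:ℤ) ≤ k / d := Int.ediv_le_ediv hd' hik
          have h2 := Int.mul_ediv_add_emod i d
          have h3 := Int.mul_ediv_add_emod k d
          have h4 : (d:ℤ) * (i / d) ≤ d * (k / d) :=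
            mul_le_mul_of_nonneg_left h1 (by omega)
          omega
        · exact hdvd_sub i
        · exact hdvd_sub k
      · -- non-multiples slot
        obtain ⟨hs1, hs2⟩ := sigShift_mem d (i % d) (k % d) x hrpos (by omega) hr'pos (by omega) hx.1 hx.2
        obtain ⟨hs3, hs4, hs5⟩ := sigShift_spec (i % d) (k % d) x hxr
        apply ih.1
        · rcases le_or_gt (i % (d:ℤ)) (k % d) with hc | hc
          · have := hs5 hc; omega
          · have := hik' hc; omega
        · intro hdvd
          have h1 : (d:ℤ) ∣ (i - i % d) := hdvd_sub i
          have h2 : (d:ℤ) ∣ (x - i % d) := by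
            have h3 := dvd_sub h1 hdvd
            have h4 : i - i % d - (i - x) = x - i % d := by ring
            rwa [h4] at h3
          have := Int.eq_zero_of_abs_lt_dvd h2 (abs_lt.2 ⟨by omega, by omega⟩)
          omega
        · intro hdvd
          have h1 : (d:ℤ) ∣ (k - k % d) := hdvd_sub k
          have h2 : (d:ℤ) ∣ (sigShift (i % d) (k % d) x - k % d) := by
            have h3 := dvd_sub h1 hdvd
            have h4 : k - k % d - (k - sigShift (i % d) (k % d) x)
                = sigShift (i % d) (k % d) x - k % d := by ring
            rwa [h4] at h3
          have := Int.eq_zero_of_abs_lt_dvd h2 (abs_lt.2 ⟨by omega, by omega⟩)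
          omega
    · -- both multiples
      intro i k hik hi hk
      rw [Hsum_succ n d (by omega), Hsum_succ n d (by omega)]
      apply Finset.sum_le_sum
      intro x hx
      rw [Finset.mem_Icc] at hx
      apply ih.1
      · omega
      · intro hdvd
        have : (d:ℤ) ∣ x := (dvd_sub_right hi).mp hdvd
        exact not_dvd_of_small d x (by omega) (by omega) (by omega) this
      · intro hdvd
        have : (d:ℤ) ∣ x := (dvd_sub_right hk).mp hdvd
        exact not_dvd_of_small d x (by omega) (by omega) (by omega) this

/-- Monotonicity of basic arithmetic Hodge sums: `H_i ≤ H_k` for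
`0 ≤ i ≤ k ≤ nd` with `d ∤ i` and `d ∤ k`. -/
theorem Hsum_mono (n d : ℕ) (hn : 1 ≤ n) (hd : 2 ≤ d) (i k : ℤ)
    (hi0 : 0 ≤ i) (hik : i ≤ k) (hk : k ≤ (n : ℤ) * d)
    (hi : ¬ (d : ℤ) ∣ i) (hkd : ¬ (d : ℤ) ∣ k) :
    Hsum n d i ≤ Hsum n d k :=
  (Hsum_key d hd n).1 i k hik hi hkd
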